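/- Let {Xⁿ} be a quasi-visual approximation of width w of a bounded metric space (S,d). Then there is a constant C ≥ 1 such that for all distinct x,y ∈ S and every m-tile X^m ∈ X^m containing x, where m = m_w(x,y), we have (1/C)·diam(X^m) ≤ d(x,y) ≤ C·diam(X^m). -/

import Mathlib

open Metric Set

variable {S : Type*}

/-- A chain of tiles in a cover `T`: consecutive tiles intersect. -/
def TileChain (T : Set (Set S)) (A B : Set S) (k : ℕ) : Prop :=
  ∃ c : ℕ → Set S, c 0 = A ∧ c k = B ∧ (∀ i, i ≤ k → c i ∈ T) ∧
    ∀ i, i < k → (c i ∩ c (i + 1)).Nonempty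

/-- The width-`w` neighborhood `U_w(A)` of a tile `A` in a cover `T`. -/
def Uw (T : Set (Set S)) (w : ℕ) (A : Set S) : Set S :=
  ⋃₀ {B | B ∈ T ∧ ∃ k, k ≤ w ∧ TileChain T A B k}

/-- The `U_w`-proximity function associated with a sequence of covers. -/
noncomputable def prox (X : ℕ → Set (Set S)) (w : ℕ) (x y : S) : ℕ∞ :=
  ⨆ n ∈ {n : ℕ | ∃ A ∈ X n, ∃ B ∈ X n, x ∈ A ∧ y ∈ B ∧
    (Uw (X n) w A ∩ Uw (X n) w B).Nonempty}, (n : ℕ∞)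

/-- `{Xⁿ}` is a quasi-visual approximation of width `w` of the metric space `S`. -/
def IsQVA [MetricSpace S] (X : ℕ → Set (Set S)) (w : ℕ) : Prop :=
  (∀ n, ⋃₀ X n = Set.univ) ∧ X 0 = {Set.univ} ∧
  (∃ C : ℝ, 1 ≤ C ∧
    (∀ n, ∀ A ∈ X n, ∀ B ∈ X n, (A ∩ B).Nonempty →
      Metric.diam A ≤ C * Metric.diam B) ∧
    (∀ n, ∀ A ∈ X n, ∀ B ∈ X n, Uw (X n) w A ∩ Uw (X n) w B = ∅ →
      ∀ a ∈ A, ∀ b ∈ B, Metric.diam A ≤ C * dist a b) ∧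
    (∀ n, ∀ A ∈ X n, ∀ B ∈ X (n + 1), (A ∩ B).Nonempty →
      Metric.diam A ≤ C * Metric.diam B ∧ Metric.diam B ≤ C * Metric.diam A)) ∧
  (∃ (k₀ : ℕ) (lam : ℝ), 0 < k₀ ∧ 0 < lam ∧ lam < 1 ∧
    ∀ n, ∀ A ∈ X n, ∀ B ∈ X (n + k₀), (A ∩ B).Nonempty →
      Metric.diam B ≤ lam * Metric.diam A)

section aux
variable [MetricSpace S]

lemma chain_dist_le (hb : Bornology.IsBounded (Set.univ : Set S))
    (c : ℕ → Set S) :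
    ∀ k, (∀ i, i < k → (c i ∩ c (i + 1)).Nonempty) →
      ∀ x ∈ c 0, ∀ y ∈ c k, dist x y ≤ ∑ i ∈ Finset.range (k + 1), Metric.diam (c i) := by
  intro k
  induction k with
  | zero =>
    intro _ x hx y hy
    simpa using Metric.dist_le_diam_of_mem (hb.subset (subset_univ _)) hx hy
  | succ k ih =>
    intro hint x hx y hy
    obtain ⟨p, hp1, hp2⟩ := hint k (by omega)
    calc dist x y ≤ dist x p + dist p y := dist_triangle ..
    _ ≤ (∑ i ∈ Finset.range (k+1), Metric.diam (c i)) + Metric.diam (c (k+1)) := by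
        gcongr
        · exact ih (fun i hi => hint i (by omega)) x hx p hp1
        · exact Metric.dist_le_diam_of_mem (hb.subset (subset_univ _)) hp2 hy
    _ = ∑ i ∈ Finset.range (k+2), Metric.diam (c i) := (Finset.sum_range_succ _ _).symm

lemma chain_diam_le {T : Set (Set S)} {C0 : ℝ} (hC : 1 ≤ C0)
    (h1 : ∀ A ∈ T, ∀ B ∈ T, (A ∩ B).Nonempty → Metric.diam A ≤ C0 * Metric.diam B)
    {c : ℕ → Set S} {k : ℕ} (hmem : ∀ i, i ≤ k → c i ∈ T)
    (hint : ∀ i, i < k → (c i ∩ c (i + 1)).Nonempty) :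
    ∀ i, i ≤ k → Metric.diam (c i) ≤ C0 ^ i * Metric.diam (c 0) ∧
      Metric.diam (c 0) ≤ C0 ^ i * Metric.diam (c i) := by
  have hC0 : (0:ℝ) < C0 := lt_of_lt_of_le one_pos hC
  intro i
  induction i with
  | zero => intro _; simp
  | succ i ih =>
    intro hik
    obtain ⟨h1', h2'⟩ := ih (by omega)
    obtain ⟨p, hp⟩ := hint i (by omega)
    have hA := hmem i (by omega)
    have hB := hmem (i+1) hik
    have e1 : Metric.diam (c (i+1)) ≤ C0 * Metric.diam (c i) :=
      h1 _ hB _ hA ⟨p, hp.2, hp.1⟩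
    have e2 : Metric.diam (c i) ≤ C0 * Metric.diam (c (i+1)) :=
      h1 _ hA _ hB ⟨p, hp⟩
    constructor
    · calc Metric.diam (c (i+1)) ≤ C0 * Metric.diam (c i) := e1
      _ ≤ C0 * (C0 ^ i * Metric.diam (c 0)) := by gcongr
      _ = C0 ^ (i+1) * Metric.diam (c 0) := by ring
    · calc Metric.diam (c 0) ≤ C0 ^ i * Metric.diam (c i) := h2'
      _ ≤ C0 ^ i * (C0 * Metric.diam (c (i+1))) := by gcongr
      _ = C0 ^ (i+1) * Metric.diam (c (i+1)) := by ring

lemma tilechain_est (hb : Bornology.IsBounded (Set.univ : Set S))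
    {T : Set (Set S)} {C0 : ℝ} (hC : 1 ≤ C0)
    (h1 : ∀ A ∈ T, ∀ B ∈ T, (A ∩ B).Nonempty → Metric.diam A ≤ C0 * Metric.diam B)
    {A D : Set S} {k : ℕ} (hch : TileChain T A D k)
    {x p : S} (hx : x ∈ A) (hp : p ∈ D) :
    dist x p ≤ (k + 1 : ℝ) * C0 ^ k * Metric.diam A ∧
      Metric.diam D ≤ C0 ^ k * Metric.diam A ∧
      Metric.diam A ≤ C0 ^ k * Metric.diam D := by
  have hC0 : (0:ℝ) < C0 := lt_of_lt_of_le one_pos hC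
  obtain ⟨c, hc0, hck, hmem, hint⟩ := hch
  subst hc0 hck
  have hdiam := chain_diam_le hC h1 hmem hint
  have hd0 : 0 ≤ Metric.diam (c 0) := Metric.diam_nonneg
  refine ⟨?_, (hdiam k le_rfl).1, (hdiam k le_rfl).2⟩
  calc dist x p ≤ ∑ i ∈ Finset.range (k + 1), Metric.diam (c i) :=
        chain_dist_le hb c k hint x hx p hp
  _ ≤ ∑ _i ∈ Finset.range (k + 1), C0 ^ k * Metric.diam (c 0) := by
      refine Finset.sum_le_sum fun i hi => ?_
      have hik : i ≤ k := by simpa using Nat.lt_succ_iff.mp (Finset.mem_range.mp hi)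
      calc Metric.diam (c i) ≤ C0 ^ i * Metric.diam (c 0) := (hdiam i hik).1
      _ ≤ C0 ^ k * Metric.diam (c 0) := by gcongr
  _ = (k + 1 : ℝ) * C0 ^ k * Metric.diam (c 0) := by
      rw [Finset.sum_const, Finset.card_range]; ring

end aux

/-- For a quasi-visual approximation of width `w` of a bounded metric space, there is a
constant `C ≥ 1` such that for all distinct `x, y ∈ S`, with `m = m_w(x,y)`, and any
`m`-tile `X^m` containing `x`, one has `(1/C)·diam(X^m) ≤ d(x,y) ≤ C·diam(X^m)`. -/
theorem stmt9 (S : Type*) [MetricSpace S]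
    (hb : Bornology.IsBounded (Set.univ : Set S))
    (X : ℕ → Set (Set S)) (w : ℕ) (hqva : IsQVA X w) :
    ∃ C : ℝ, 1 ≤ C ∧ ∀ x y : S, x ≠ y → ∀ m : ℕ, prox X w x y = (m : ℕ∞) →
      ∀ A ∈ X m, x ∈ A →
        Metric.diam A / C ≤ dist x y ∧ dist x y ≤ C * Metric.diam A := by
  obtain ⟨hcov, hX0, ⟨C0, hC0one, h1, h2, h3⟩, -⟩ := hqva
  have hC0pos : (0:ℝ) < C0 := lt_of_lt_of_le one_pos hC0one
  set C : ℝ := C0 ^ 2 + 2 * (w + 1) * C0 ^ (3 * w + 3) with hCdef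
  have hCpos : (0:ℝ) < C := by positivity
  have hCone : (1:ℝ) ≤ C := by
    have h2' : (1:ℝ) ≤ C0 ^ 2 := by nlinarith
    have h3' : (0:ℝ) ≤ 2 * (w + 1) * C0 ^ (3 * w + 3) := by positivity
    linarith
  refine ⟨C, hCone, ?_⟩
  intro x y hxy m hprox A hA hxA
  have hdA : 0 ≤ Metric.diam A := Metric.diam_nonneg
  set P : ℕ → Prop := fun n => ∃ A ∈ X n, ∃ B ∈ X n, x ∈ A ∧ y ∈ B ∧
    (Uw (X n) w A ∩ Uw (X n) w B).Nonempty with hPdef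
  have hproxP : prox X w x y = ⨆ n ∈ {n : ℕ | P n}, (n : ℕ∞) := rfl
  -- every n with P n satisfies n ≤ m
  have hle : ∀ n, P n → n ≤ m := by
    intro n hn
    have : (n : ℕ∞) ≤ ⨆ i ∈ {n | P n}, (i : ℕ∞) := le_biSup _ hn
    rw [← hproxP, hprox] at this
    exact Nat.cast_le.mp this
  -- P 0 holds
  have hP0 : P 0 := by
    have huniv : (Set.univ : Set S) ∈ X 0 := by rw [hX0]; rfl
    have hUw : x ∈ Uw (X 0) w (Set.univ : Set S) := by
      refine ⟨Set.univ, ⟨huniv, 0, Nat.zero_le _, ?_⟩, mem_univ x⟩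
      exact ⟨fun _ => Set.univ, rfl, rfl, fun _ _ => huniv, fun i hi => by omega⟩
    exact ⟨Set.univ, huniv, Set.univ, huniv, mem_univ x, mem_univ y, ⟨x, hUw, hUw⟩⟩
  -- P m holds
  have hPm : P m := by
    rcases Nat.eq_zero_or_pos m with hm0 | hmpos
    · rwa [hm0]
    by_contra hPmfalse
    have hub : (⨆ n ∈ {n | P n}, (n : ℕ∞)) ≤ ((m - 1 : ℕ) : ℕ∞) := by
      refine iSup₂_le fun n hn => ?_
      have h := hle n hn
      have : n ≠ m := fun h' => hPmfalse (h' ▸ hn)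
      exact Nat.cast_le.mpr (by omega)
    rw [← hproxP, hprox] at hub
    have := Nat.cast_le.mp hub
    omega
  -- P (m+1) fails
  have hPm1 : ¬ P (m + 1) := fun h => by have := hle _ h; omega
  -- Lower bound: diam A ≤ C0^2 * dist x y
  have hlow : Metric.diam A ≤ C0 ^ 2 * dist x y := by
    obtain ⟨A', hA'mem, hxA'⟩ : ∃ A' ∈ X (m + 1), x ∈ A' := by
      have : x ∈ ⋃₀ X (m + 1) := by rw [hcov]; exact mem_univ x
      simpa [Set.mem_sUnion] using this
    obtain ⟨B', hB'mem, hyB'⟩ : ∃ B' ∈ X (m + 1), y ∈ B' := by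
      have : y ∈ ⋃₀ X (m + 1) := by rw [hcov]; exact mem_univ y
      simpa [Set.mem_sUnion] using this
    have hdisj : Uw (X (m+1)) w A' ∩ Uw (X (m+1)) w B' = ∅ := by
      by_contra hne
      exact hPm1 ⟨A', hA'mem, B', hB'mem, hxA', hyB',
        Set.nonempty_iff_ne_empty.mpr hne⟩
    have e1 : Metric.diam A' ≤ C0 * dist x y := h2 (m+1) A' hA'mem B' hB'mem hdisj x hxA' y hyB'
    have e2 : Metric.diam A ≤ C0 * Metric.diam A' := (h3 m A hA A' hA'mem ⟨x, hxA, hxA'⟩).1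
    calc Metric.diam A ≤ C0 * Metric.diam A' := e2
    _ ≤ C0 * (C0 * dist x y) := by gcongr
    _ = C0 ^ 2 * dist x y := by ring
  -- Upper bound
  obtain ⟨A0, hA0mem, B0, hB0mem, hxA0, hyB0, p, hpA, hpB⟩ := hPm
  obtain ⟨D, ⟨hDmem, k1, hk1, hchD⟩, hpD⟩ := hpA
  obtain ⟨E, ⟨hEmem, k2, hk2, hchE⟩, hpE⟩ := hpB
  have h1m := h1 m
  obtain ⟨edxp, edD, -⟩ := tilechain_est hb hC0one h1m hchD hxA0 hpD
  obtain ⟨edyp, edE2, -⟩ := tilechain_est hb hC0one h1m hchE hyB0 hpE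
  -- translate: dist y p bound gives diam B0 ≤ C0^k2 * diam E earlier; we need it:
  obtain ⟨-, -, eB0E⟩ := tilechain_est hb hC0one h1m hchE hyB0 hpE
  have hdA0 : 0 ≤ Metric.diam A0 := Metric.diam_nonneg
  have hdB0 : 0 ≤ Metric.diam B0 := Metric.diam_nonneg
  have hdD : 0 ≤ Metric.diam D := Metric.diam_nonneg
  -- diam E ≤ C0 * diam D
  have eED : Metric.diam E ≤ C0 * Metric.diam D := h1m E hEmem D hDmem ⟨p, hpE, hpD⟩
  -- diam A0 ≤ C0 * diam A
  have eA0A : Metric.diam A0 ≤ C0 * Metric.diam A := h1m A0 hA0mem A hA ⟨x, hxA0, hxA⟩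
  have eB0 : Metric.diam B0 ≤ C0 ^ (k1 + k2 + 1) * Metric.diam A0 := by
    calc Metric.diam B0 ≤ C0 ^ k2 * Metric.diam E := eB0E
    _ ≤ C0 ^ k2 * (C0 * Metric.diam D) := by gcongr
    _ ≤ C0 ^ k2 * (C0 * (C0 ^ k1 * Metric.diam A0)) := by gcongr
    _ = C0 ^ (k1 + k2 + 1) * Metric.diam A0 := by ring
  have hup : dist x y ≤ C * Metric.diam A := by
    have hxp : dist x p ≤ (w + 1 : ℝ) * C0 ^ (3 * w + 2) * Metric.diam A0 := by
      have b1 : (k1 + 1 : ℝ) ≤ (w + 1 : ℝ) := by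
        have : (k1 : ℝ) ≤ (w : ℝ) := Nat.cast_le.mpr hk1
        linarith
      have b2 : C0 ^ k1 ≤ C0 ^ (3 * w + 2) := pow_le_pow_right₀ hC0one (by omega)
      calc dist x p ≤ (k1 + 1 : ℝ) * C0 ^ k1 * Metric.diam A0 := edxp
      _ ≤ (w + 1 : ℝ) * C0 ^ (3 * w + 2) * Metric.diam A0 :=
          mul_le_mul (mul_le_mul b1 b2 (by positivity) (by positivity)) le_rfl hdA0
            (by positivity)
    have hyp : dist y p ≤ (w + 1 : ℝ) * C0 ^ (3 * w + 2) * Metric.diam A0 := by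
      calc dist y p ≤ (k2 + 1 : ℝ) * C0 ^ k2 * Metric.diam B0 := edyp
      _ ≤ (k2 + 1 : ℝ) * C0 ^ k2 * (C0 ^ (k1 + k2 + 1) * Metric.diam A0) := by gcongr
      _ = (k2 + 1 : ℝ) * C0 ^ (k2 + (k1 + k2 + 1)) * Metric.diam A0 := by
          rw [pow_add]; ring
      _ ≤ (w + 1 : ℝ) * C0 ^ (3 * w + 2) * Metric.diam A0 := by
          have b1 : (k2 + 1 : ℝ) ≤ (w + 1 : ℝ) := by
            have : (k2 : ℝ) ≤ (w : ℝ) := Nat.cast_le.mpr hk2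
            linarith
          have b2 : C0 ^ (k2 + (k1 + k2 + 1)) ≤ C0 ^ (3 * w + 2) :=
            pow_le_pow_right₀ hC0one (by omega)
          exact mul_le_mul (mul_le_mul b1 b2 (by positivity) (by positivity)) le_rfl hdA0
            (by positivity)
    calc dist x y ≤ dist x p + dist y p := dist_triangle_right x y p
    _ ≤ 2 * ((w + 1 : ℝ) * C0 ^ (3 * w + 2) * Metric.diam A0) := by linarith
    _ ≤ 2 * ((w + 1 : ℝ) * C0 ^ (3 * w + 2) * (C0 * Metric.diam A)) := by gcongr
    _ = 2 * (w + 1 : ℝ) * C0 ^ (3 * w + 3) * Metric.diam A := by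
        rw [pow_succ]; ring
    _ ≤ C * Metric.diam A := by
        have : (0:ℝ) ≤ C0 ^ 2 := by positivity
        nlinarith [hdA]
  refine ⟨?_, hup⟩
  rw [div_le_iff₀ hCpos]
  calc Metric.diam A ≤ C0 ^ 2 * dist x y := hlow
  _ ≤ C * dist x y := by
      have : (0:ℝ) ≤ 2 * (w + 1) * C0 ^ (3 * w + 3) := by positivity
      nlinarith [dist_nonneg (x := x) (y := y)]
  _ = dist x y * C := by ring
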